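/- Let p be a prime and 𝔉 an ℕ_p-saturated formation of finite groups containing every finite p-group. Let N be an elementary abelian normal p-subgroup of a finite group G, and let G/N act on N by the action induced by conjugation (well defined since N is abelian). If the semidirect product N ⋊ (G/N) belongs to 𝔉, then G ∈ 𝔉. -/

import Mathlib

set_option maxHeartbeats 1000000
set_option linter.unusedVariables false

/-- A bundled finite group. -/
structure FinGrp : Type 1 where
  carrier : Type
  [grp : Group carrier]
  [fin : Finite carrier]

attribute [instance] FinGrp.grp FinGrp.fin

/-- A class of finite groups. -/
abbrev GroupClass : Type 1 := ∀ (G : Type) [Group G] [Finite G], Prop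

/-- The empty class of groups. -/
def EmptyClass : GroupClass := fun _ _ _ => False

/-- A formation: a class of finite groups closed under isomorphism, homomorphic images and
subdirect products. -/
structure IsFormation (F : GroupClass) : Prop where
  iso_closed : ∀ (G : Type) [Group G] [Finite G] (H : Type) [Group H] [Finite H],
    Nonempty (G ≃* H) → F G → F H
  quotient_closed : ∀ (G : Type) [Group G] [Finite G] (N : Subgroup G) [N.Normal],
    F G → F (G ⧸ N)
  subdirect_closed : ∀ (G : Type) [Group G] [Finite G] (N₁ N₂ : Subgroup G)
    [N₁.Normal] [N₂.Normal], N₁ ⊓ N₂ = ⊥ → F (G ⧸ N₁) → F (G ⧸ N₂) → F G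

/-- `H/K` is a chief factor of `G` : both are normal in `G`, `K < H`, and no normal subgroup
of `G` lies strictly between them. -/
structure IsChiefFactor (G : Type) [Group G] (H K : Subgroup G) : Prop where
  normalH : H.Normal
  normalK : K.Normal
  lt : K < H
  no_middle : ∀ N : Subgroup G, N.Normal → K ≤ N → N ≤ H → N = K ∨ N = H

/-- The centralizer `C_G(H/K) = {g ∈ G | ∀ h ∈ H, g h g⁻¹ h⁻¹ ∈ K}` of a factor `H/K`. -/
def relCentralizer {G : Type} [Group G] (H K : Subgroup G) (hK : K.Normal) : Subgroup G where
  carrier := {g : G | ∀ h ∈ H, g * h * g⁻¹ * h⁻¹ ∈ K}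
  one_mem' := by intro h hh; simpa using K.one_mem
  mul_mem' := by
    intro a b ha hb h hh
    have key : a * b * h * (a * b)⁻¹ * h⁻¹ =
        (a * (b * h * b⁻¹ * h⁻¹) * a⁻¹) * (a * h * a⁻¹ * h⁻¹) := by group
    rw [key]
    exact K.mul_mem (hK.conj_mem _ (hb h hh) a) (ha h hh)
  inv_mem' := by
    intro a ha h hh
    have h1 : (a * h * a⁻¹ * h⁻¹)⁻¹ ∈ K := K.inv_mem (ha h hh)
    have key : a⁻¹ * h * a⁻¹⁻¹ * h⁻¹ = a⁻¹ * (a * h * a⁻¹ * h⁻¹)⁻¹ * a⁻¹⁻¹ := by group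
    exact key ▸ hK.conj_mem _ h1 a⁻¹

theorem mem_relCentralizer_iff {G : Type} [Group G] {H K : Subgroup G} (hK : K.Normal)
    (g : G) : g ∈ relCentralizer H K hK ↔ ∀ h ∈ H, g * h * g⁻¹ * h⁻¹ ∈ K := Iff.rfl

theorem relCentralizer_normal {G : Type} [Group G] {H K : Subgroup G}
    (hH : H.Normal) (hK : K.Normal) : (relCentralizer H K hK).Normal := by
  constructor
  intro c hc g h hh
  have hh' : g⁻¹ * h * g ∈ H := by simpa using hH.conj_mem h hh g⁻¹
  have hk := hc _ hh'
  have key : g * c * g⁻¹ * h * (g * c * g⁻¹)⁻¹ * h⁻¹ =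
      g * (c * (g⁻¹ * h * g) * c⁻¹ * (g⁻¹ * h * g)⁻¹) * g⁻¹ := by group
  exact key ▸ hK.conj_mem _ hk g

theorem normal_sInf {G : Type} [Group G] {S : Set (Subgroup G)}
    (h : ∀ N ∈ S, N.Normal) : (sInf S).Normal := by
  constructor
  intro n hn g
  rw [Subgroup.mem_sInf] at hn ⊢
  intro N hN
  exact (h N hN).conj_mem n (hn N hN) g

theorem normal_sSup {G : Type} [Group G] {S : Set (Subgroup G)}
    (h : ∀ N ∈ S, N.Normal) : (sSup S).Normal := by
  constructor
  intro n hn g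
  rw [sSup_eq_iSup'] at hn ⊢
  refine Subgroup.iSup_induction (fun N : S => (N : Subgroup G))
    (C := fun x => g * x * g⁻¹ ∈ ⨆ N : S, (N : Subgroup G)) hn
    (fun N x hx => ?_) ?_ (fun x y hx hy => ?_)
  · exact le_iSup (fun N : S => (N : Subgroup G)) N ((h N N.2).conj_mem x hx g)
  · simpa using Subgroup.one_mem _
  · show g * (x * y) * g⁻¹ ∈ _
    have key : g * (x * y) * g⁻¹ = g * x * g⁻¹ * (g * y * g⁻¹) := by group
    rw [key]
    exact Subgroup.mul_mem _ hx hy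
/-- `O_p(G)`: the largest normal `p`-subgroup of `G` (the join of all normal `p`-subgroups). -/
def pRadical (p : ℕ) (G : Type) [Group G] : Subgroup G :=
  sSup {N : Subgroup G | N.Normal ∧ IsPGroup p N}

instance pRadical_normal (p : ℕ) (G : Type) [Group G] : (pRadical p G).Normal :=
  normal_sSup fun _ hN => hN.1

/-- `O_{p'}(G)`: the largest normal subgroup of `G` of order coprime to `p`. -/
def pPrimeRadical (p : ℕ) (G : Type) [Group G] : Subgroup G :=
  sSup {N : Subgroup G | N.Normal ∧ Nat.Coprime (Nat.card N) p}

instance pPrimeRadical_normal (p : ℕ) (G : Type) [Group G] : (pPrimeRadical p G).Normal :=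
  normal_sSup fun _ hN => hN.1

/-- `O_{p',p}(G)`: the preimage in `G` of `O_p(G / O_{p'}(G))`. -/
def pPrimePRadical (p : ℕ) (G : Type) [Group G] : Subgroup G :=
  (pRadical p (G ⧸ pPrimeRadical p G)).comap (QuotientGroup.mk' (pPrimeRadical p G))

instance pPrimePRadical_normal (p : ℕ) (G : Type) [Group G] : (pPrimePRadical p G).Normal :=
  (pRadical_normal p _).comap _

/-- A composition series of `G` : a chain `⊥ = c 0 ≤ ⋯ ≤ c n = ⊤` of subgroups, each normal
in the next one with simple quotient. -/
def IsCompSeries {G : Type} [Group G] (n : ℕ) (c : Fin (n + 1) → Subgroup G) : Prop :=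
  c 0 = ⊥ ∧ c (Fin.last n) = ⊤ ∧
  ∀ i : Fin n, c i.castSucc ≤ c i.succ ∧
    ∃ hn : ((c i.castSucc).subgroupOf (c i.succ)).Normal,
      letI := hn
      IsSimpleGroup ((c i.succ) ⧸ (c i.castSucc).subgroupOf (c i.succ))

/-- `S` is (isomorphic to) a composition factor of the finite group `G`. -/
def IsCompFactor (S : Type) [Group S] (G : Type) [Group G] : Prop :=
  ∃ (n : ℕ) (c : Fin (n + 1) → Subgroup G), IsCompSeries n c ∧
    ∃ i : Fin n, ∃ hn : ((c i.castSucc).subgroupOf (c i.succ)).Normal,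
      letI := hn
      Nonempty (((c i.succ) ⧸ (c i.castSucc).subgroupOf (c i.succ)) ≃* S)

/-- The small centralizer `c_G(H/K)` of a factor `H/K` : the subgroup generated by all normal
subgroups `N` of `G` such that no composition factor of `NK/K` is isomorphic to a composition
factor of `H/K`. -/
def smallCentralizer {G : Type} [Group G] (H K : Subgroup G) (hK : K.Normal) : Subgroup G :=
  haveI := hK
  sSup {N : Subgroup G | N.Normal ∧ ∀ (S : Type) (_ : Group S),
    IsCompFactor S (↥(N ⊔ K) ⧸ K.subgroupOf (N ⊔ K)) → ¬ IsCompFactor S (H ⧸ K.subgroupOf H)}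

theorem smallCentralizer_normal {G : Type} [Group G] {H K : Subgroup G} (hK : K.Normal) :
    (smallCentralizer H K hK).Normal :=
  normal_sSup fun _ hN => hN.1

/-- `C^S(G)`: the intersection of the centralizers of all chief factors of `G` all of whose
composition factors are isomorphic to `S`. -/
def CSRad (S : Type) [Group S] (G : Type) [Group G] : Subgroup G :=
  sInf {C : Subgroup G | ∃ (H K : Subgroup G) (hcf : IsChiefFactor G H K),
    (haveI := hcf.normalK;
      ∀ (T : Type) (_ : Group T), IsCompFactor T (H ⧸ K.subgroupOf H) → Nonempty (T ≃* S)) ∧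
    C = relCentralizer H K hcf.normalK}

instance CSRad_normal (S : Type) [Group S] (G : Type) [Group G] : (CSRad S G).Normal :=
  normal_sInf fun C hC => by
    obtain ⟨H, K, hcf, -, rfl⟩ := hC
    exact relCentralizer_normal hcf.normalH hcf.normalK

/-- `C^p(G)`: the intersection of the centralizers of all chief factors of `G` whose order is
a power of the prime `p`. -/
def CpRad (p : ℕ) (G : Type) [Group G] : Subgroup G :=
  sInf {C : Subgroup G | ∃ (H K : Subgroup G) (hcf : IsChiefFactor G H K),
    (∃ n : ℕ, Nat.card (H ⧸ K.subgroupOf H) = p ^ n) ∧ C = relCentralizer H K hcf.normalK}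

instance CpRad_normal (p : ℕ) (G : Type) [Group G] : (CpRad p G).Normal :=
  normal_sInf fun C hC => by
    obtain ⟨H, K, hcf, -, rfl⟩ := hC
    exact relCentralizer_normal hcf.normalH hcf.normalK

/-- The centralizer of a normal subgroup is normal. -/
instance centralizer_normal_of_normal {G : Type} [Group G] (N : Subgroup G) [hN : N.Normal] :
    (Subgroup.centralizer (N : Set G)).Normal := by
  constructor
  intro c hc g
  rw [Subgroup.mem_centralizer_iff] at hc ⊢
  intro h hh
  have hh' : g⁻¹ * h * g ∈ N := by simpa using hN.conj_mem h hh g⁻¹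
  have hcomm := hc _ hh'
  have e1 : h * (g * c * g⁻¹) = g * (g⁻¹ * h * g * c) * g⁻¹ := by group
  rw [e1, hcomm]
  group

/-- The intersection of two normal subgroups is normal. -/
instance inf_normal {G : Type} [Group G] (A B : Subgroup G) [hA : A.Normal] [hB : B.Normal] :
    (A ⊓ B).Normal :=
  ⟨fun n hn g => ⟨hA.conj_mem n hn.1 g, hB.conj_mem n hn.2 g⟩⟩

instance finite_semidirectProduct {N G : Type} [Group N] [Group G] (φ : G →* MulAut N)
    [Finite N] [Finite G] : Finite (N ⋊[φ] G) :=
  Finite.of_injective (fun x => (x.left, x.right)) (by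
    intro a b hab
    simp only [Prod.mk.injEq] at hab
    exact SemidirectProduct.ext hab.1 hab.2)
/-! ### Satellites -/

/-- A local satellite: a map assigning to each prime a class of finite groups which is either
empty or a formation. -/
def IsLocalSatellite (f : ℕ → GroupClass) : Prop :=
  ∀ p : ℕ, p.Prime → (f p = EmptyClass ∨ IsFormation (f p))

/-- A chief factor `H/K` of `G` is `f`-central for a local satellite `f` if
`G / C_G(H/K) ∈ f q` for every prime `q` dividing `|H/K|`. -/
def LocFCentral (f : ℕ → GroupClass) {G : Type} [Group G] [Finite G]
    (H K : Subgroup G) (hcf : IsChiefFactor G H K) : Prop :=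
  ∀ q : ℕ, q.Prime → q ∣ Nat.card (H ⧸ K.subgroupOf H) →
    haveI := relCentralizer_normal hcf.normalH hcf.normalK
    f q (G ⧸ relCentralizer H K hcf.normalK)

/-- `LF f`: the class of all finite groups all of whose chief factors are `f`-central. -/
def LF (f : ℕ → GroupClass) (G : Type) [Group G] [Finite G] : Prop :=
  ∀ (H K : Subgroup G) (hcf : IsChiefFactor G H K), LocFCentral f H K hcf

/-- An `ω`-local satellite: values `f p` for `p ∈ ω` and a value `f'` (= `f(ω')`),
all empty or formations. -/
def IsOmegaLocalSatellite (ω : Set ℕ) (f : ℕ → GroupClass) (f' : GroupClass) : Prop :=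
  (∀ p ∈ ω, f p = EmptyClass ∨ IsFormation (f p)) ∧ (f' = EmptyClass ∨ IsFormation f')

/-- A chief factor `H/K` is `f`-central for the `ω`-local satellite `(f, f')`. -/
def OmegaFCentral (ω : Set ℕ) (f : ℕ → GroupClass) (f' : GroupClass) {G : Type} [Group G]
    [Finite G] (H K : Subgroup G) (hcf : IsChiefFactor G H K) : Prop :=
  ((∃ p ∈ ω, p ∣ Nat.card (H ⧸ K.subgroupOf H)) ∧
    ∀ p ∈ ω, p ∣ Nat.card (H ⧸ K.subgroupOf H) →
      haveI := relCentralizer_normal hcf.normalH hcf.normalK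
      f p (G ⧸ relCentralizer H K hcf.normalK)) ∨
  ((∀ p ∈ ω, ¬ p ∣ Nat.card (H ⧸ K.subgroupOf H)) ∧
    haveI := smallCentralizer_normal (H := H) hcf.normalK;
    f' (G ⧸ smallCentralizer H K hcf.normalK))

/-- `LF_ω(f)`: the class of all finite groups all of whose chief factors are `f`-central. -/
def LFomega (ω : Set ℕ) (f : ℕ → GroupClass) (f' : GroupClass) (G : Type) [Group G]
    [Finite G] : Prop :=
  ∀ (H K : Subgroup G) (hcf : IsChiefFactor G H K), OmegaFCentral ω f f' H K hcf

/-- A function assigning a class of finite groups to every finite group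
(used on simple groups). -/
abbrev CompSatFun : Type 1 := ∀ (S : Type) [Group S] [Finite S], GroupClass

/-- A composition satellite: assigns to each finite simple group (invariantly under isomorphism)
a class which is either empty or a formation. -/
def IsCompSatellite (f : CompSatFun) : Prop :=
  (∀ (S : Type) [Group S] [Finite S] (T : Type) [Group T] [Finite T],
      IsSimpleGroup S → IsSimpleGroup T → Nonempty (S ≃* T) → f S = f T) ∧
  (∀ (S : Type) [Group S] [Finite S], IsSimpleGroup S → (f S = EmptyClass ∨ IsFormation (f S)))

/-- A chief factor `H/K` of `G` is `f`-central for a composition satellite `f` if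
`G / C_G(H/K) ∈ f S` where `S` is the composition type of `H/K`. -/
def CompFCentral (f : CompSatFun) {G : Type} [Group G] [Finite G]
    (H K : Subgroup G) (hcf : IsChiefFactor G H K) : Prop :=
  ∀ (S : Type) (_ : Group S) (_ : Finite S),
    (haveI := hcf.normalK; IsCompFactor S (H ⧸ K.subgroupOf H)) →
    haveI := relCentralizer_normal hcf.normalH hcf.normalK
    f S (G ⧸ relCentralizer H K hcf.normalK)

/-- `CF f`: the class of all finite groups all of whose chief factors are `f`-central. -/
def CF (f : CompSatFun) (G : Type) [Group G] [Finite G] : Prop :=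
  ∀ (H K : Subgroup G) (hcf : IsChiefFactor G H K), CompFCentral f H K hcf

/-- An (isomorphism-closed) class of finite simple groups. -/
def IsSimpleClass (L : GroupClass) : Prop :=
  (∀ (S : Type) [Group S] [Finite S], L S → IsSimpleGroup S) ∧
  (∀ (S : Type) [Group S] [Finite S] (T : Type) [Group T] [Finite T],
    Nonempty (S ≃* T) → L S → L T)

/-- An `𝔏`-composition satellite: values `f S` for simple `S ∈ 𝔏` (invariant under isomorphism)
and a single value `f'` (= `f(𝔏')`), all empty or formations. -/
def IsLCompSatellite (L : GroupClass) (f : CompSatFun) (f' : GroupClass) : Prop :=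
  (∀ (S : Type) [Group S] [Finite S] (T : Type) [Group T] [Finite T],
      L S → L T → Nonempty (S ≃* T) → f S = f T) ∧
  (∀ (S : Type) [Group S] [Finite S], L S → (f S = EmptyClass ∨ IsFormation (f S))) ∧
  (f' = EmptyClass ∨ IsFormation f')

/-- A chief factor `H/K` is `f`-central for the `𝔏`-composition satellite `(f, f')` :
either its composition type `S` lies in `𝔏` and `G/C_G(H/K) ∈ f S`, or its composition type
lies in `𝔏'` and `G/c_G(H/K) ∈ f'`. -/
def LCompFCentral (L : GroupClass) (f : CompSatFun) (f' : GroupClass) {G : Type} [Group G]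
    [Finite G] (H K : Subgroup G) (hcf : IsChiefFactor G H K) : Prop :=
  ((∃ (S : Type) (_ : Group S) (_ : Finite S),
      (haveI := hcf.normalK; IsCompFactor S (H ⧸ K.subgroupOf H)) ∧ L S ∧
      (haveI := relCentralizer_normal hcf.normalH hcf.normalK;
        f S (G ⧸ relCentralizer H K hcf.normalK)))) ∨
  ((∃ (S : Type) (_ : Group S) (_ : Finite S),
      (haveI := hcf.normalK; IsCompFactor S (H ⧸ K.subgroupOf H)) ∧ IsSimpleGroup S ∧ ¬ L S) ∧
    haveI := smallCentralizer_normal (H := H) hcf.normalK;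
    f' (G ⧸ smallCentralizer H K hcf.normalK))

/-- `CF_𝔏(f)`: the class of all finite groups all of whose chief factors are `f`-central. -/
def CFL (L : GroupClass) (f : CompSatFun) (f' : GroupClass) (G : Type) [Group G]
    [Finite G] : Prop :=
  ∀ (H K : Subgroup G) (hcf : IsChiefFactor G H K), LCompFCentral L f f' H K hcf

/-! ### Radicals and saturation -/

/-- The largest normal subgroup all of whose composition factors lie in `𝔏`. -/
def ELRadical (L : GroupClass) (G : Type) [Group G] [Finite G] : Subgroup G :=
  sSup {N : Subgroup G | N.Normal ∧
    ∀ (S : Type) (_ : Group S) (_ : Finite S), IsCompFactor S N → L S}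

instance ELRadical_normal (L : GroupClass) (G : Type) [Group G] [Finite G] :
    (ELRadical L G).Normal :=
  normal_sSup fun _ hN => hN.1

/-- `G_{ωd}`: the largest normal subgroup of `G` all of whose `G`-chief factors below it have
order divisible by some prime in `ω`. -/
def omegadRadical (ω : Set ℕ) (G : Type) [Group G] [Finite G] : Subgroup G :=
  sSup {N : Subgroup G | N.Normal ∧ ∀ (H K : Subgroup G), IsChiefFactor G H K → H ≤ N →
    ∃ p ∈ ω, p ∣ Nat.card (H ⧸ K.subgroupOf H)}

instance omegadRadical_normal (ω : Set ℕ) (G : Type) [Group G] [Finite G] :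
    (omegadRadical ω G).Normal :=
  normal_sSup fun _ hN => hN.1

/-- The soluble radical: the largest normal soluble subgroup. -/
def solRadical (G : Type) [Group G] : Subgroup G :=
  sSup {N : Subgroup G | N.Normal ∧ IsSolvable N}

instance solRadical_normal (G : Type) [Group G] : (solRadical G).Normal :=
  normal_sSup fun _ hN => hN.1

/-- A finite group is `ω`-soluble if each of its composition factors either has order divisible
by no prime in `ω`, or is cyclic of order `p` for some `p ∈ ω`. -/
def IsOmegaSoluble (ω : Set ℕ) (X : Type) [Group X] : Prop :=
  ∀ (S : Type) (_ : Group S) (_ : Finite S), IsCompFactor S X →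
    (∀ p ∈ ω, ¬ p ∣ Nat.card S) ∨ (∃ p ∈ ω, Nat.card S = p ∧ IsCyclic S)

/-- The `ω`-soluble radical: the largest normal `ω`-soluble subgroup. -/
def omegaSolRadical (ω : Set ℕ) (G : Type) [Group G] : Subgroup G :=
  sSup {N : Subgroup G | N.Normal ∧ IsOmegaSoluble ω N}

instance omegaSolRadical_normal (ω : Set ℕ) (G : Type) [Group G] :
    (omegaSolRadical ω G).Normal :=
  normal_sSup fun _ hN => hN.1

/-- `𝔉` is `ℕ_p`-saturated : whenever `N` is a normal `p`-subgroup of `G` with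
`G/Φ(N) ∈ 𝔉`, then `G ∈ 𝔉`. -/
def NpSaturated (p : ℕ) (F : GroupClass) : Prop :=
  ∀ (G : Type) [Group G] [Finite G] (N : Subgroup G) [N.Normal], IsPGroup p N →
    ∀ (M : Subgroup G) [M.Normal], M = (frattini N).map N.subtype → F (G ⧸ M) → F G

/-- A minimal normal subgroup. -/
def IsMinimalNormal {G : Type} [Group G] (N : Subgroup G) : Prop :=
  N.Normal ∧ N ≠ ⊥ ∧ ∀ M : Subgroup G, M.Normal → M < N → M = ⊥

/-- The socle: the subgroup generated by all minimal normal subgroups. -/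
def socle (G : Type) [Group G] : Subgroup G :=
  sSup {N : Subgroup G | IsMinimalNormal N}

/-- A finite group is supersoluble if it has a chain of normal subgroups with cyclic
successive quotients. -/
def IsSupersoluble (X : Type) [Group X] : Prop :=
  ∃ (m : ℕ) (c : Fin (m + 1) → Subgroup X), c 0 = ⊥ ∧ c (Fin.last m) = ⊤ ∧
    (∀ i : Fin m, c i.castSucc ≤ c i.succ) ∧ (∀ i : Fin (m + 1), (c i).Normal) ∧
    ∀ i : Fin m, ∃ hn : ((c i.castSucc).subgroupOf (c i.succ)).Normal,
      letI := hn
      IsCyclic ((c i.succ) ⧸ (c i.castSucc).subgroupOf (c i.succ))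

/-- `Q(𝒳)` for `𝒳 = {G/C^p(G) | G ∈ F}`: the class of all (finite) groups isomorphic to a
quotient of some `G/C^p(G)` with `G ∈ F`. -/
def QModCp (p : ℕ) (F : GroupClass) (X : Type) [Group X] [Finite X] : Prop :=
  ∃ Gb : FinGrp, F Gb.carrier ∧
    ∃ (N : Subgroup (Gb.carrier ⧸ CpRad p Gb.carrier)) (_ : N.Normal),
      Nonempty (((Gb.carrier ⧸ CpRad p Gb.carrier) ⧸ N) ≃* X)

/-- The abelian members of a class of (simple) groups. -/
def abelianIn (L : GroupClass) (S : Type) [Group S] [Finite S] : Prop :=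
  L S ∧ ∀ a b : S, a * b = b * a

open scoped Pointwise

/-- The multiplicative group structure on `AddAut A` used by the old library. -/
instance addAutMulGroupLegacy (A : Type*) [Add A] : Group (AddAut A) where
  mul g h := AddEquiv.trans h g
  one := AddEquiv.refl _
  inv := AddEquiv.symm
  mul_assoc _ _ _ := rfl
  one_mul _ := rfl
  mul_one _ := rfl
  inv_mul_cancel := AddEquiv.self_trans_symm

/-! ### Generic helpers -/

theorem mem_frattini_of_central_commutator {X : Type*} [Group X] {z u v : X}
    (hz : ∀ x : X, z * x = x * z) (hc : z = u * v * u⁻¹ * v⁻¹) : z ∈ frattini X := by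
  rw [frattini, Order.radical]
  rw [Subgroup.mem_iInf]
  intro M
  rw [Subgroup.mem_iInf]
  intro hM
  by_contra hzM
  haveI hnz : (Subgroup.zpowers z).Normal := by
    constructor
    intro n hn g
    obtain ⟨k, rfl⟩ := Subgroup.mem_zpowers_iff.mp hn
    have hck : ∀ x : X, Commute (z ^ k) x := fun x => (show Commute z x from hz x).zpow_left k
    rw [← (hck g).eq, mul_assoc, mul_inv_cancel, mul_one]
    exact Subgroup.zpowers_le.mpr (Subgroup.mem_zpowers z) (Subgroup.mem_zpowers_iff.mpr ⟨k, rfl⟩)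
  have hsup : M ⊔ Subgroup.zpowers z = ⊤ := by
    apply hM.2
    rw [left_lt_sup]
    intro hle
    exact hzM (hle (Subgroup.mem_zpowers z))
  have hmemu : u ∈ (M : Set X) * (Subgroup.zpowers z : Set X) := by
    rw [← Subgroup.mul_normal]
    rw [hsup]
    trivial
  have hmemv : v ∈ (M : Set X) * (Subgroup.zpowers z : Set X) := by
    rw [← Subgroup.mul_normal, hsup]; trivial
  obtain ⟨m₁, hm₁, b₁, hb₁, rfl⟩ := hmemu
  obtain ⟨m₂, hm₂, b₂, hb₂, rfl⟩ := hmemv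
  obtain ⟨k₁, rfl⟩ := Subgroup.mem_zpowers_iff.mp hb₁
  obtain ⟨k₂, rfl⟩ := Subgroup.mem_zpowers_iff.mp hb₂
  have hck : ∀ (k : ℤ) (x : X), Commute (z ^ k) x := fun k x => (show Commute z x from hz x).zpow_left k
  apply hzM
  have key : z = m₁ * m₂ * m₁⁻¹ * m₂⁻¹ := by
    rw [hc]
    have e1 : (m₁ * z ^ k₁) * (m₂ * z ^ k₂) * (m₁ * z ^ k₁)⁻¹ * (m₂ * z ^ k₂)⁻¹
        = m₁ * (z ^ k₁ * (m₂ * z ^ k₂) * (z ^ k₁)⁻¹) * m₁⁻¹ * ((z ^ k₂)⁻¹ * m₂⁻¹) := by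
      group
    rw [e1, (hck k₁ (m₂ * z ^ k₂)).eq, mul_assoc (m₂ * z ^ k₂), mul_inv_cancel, mul_one]
    have e2 : m₁ * (m₂ * z ^ k₂) * m₁⁻¹ * ((z ^ k₂)⁻¹ * m₂⁻¹)
        = m₁ * m₂ * (z ^ k₂ * m₁⁻¹ * (z ^ k₂)⁻¹) * m₂⁻¹ := by group
    rw [e2, (hck k₂ m₁⁻¹).eq, mul_assoc m₁⁻¹, mul_inv_cancel, mul_one]
  rw [key]
  exact M.mul_mem (M.mul_mem (M.mul_mem hm₁ hm₂) (M.inv_mem hm₁)) (M.inv_mem hm₂)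
/-! ### The gadget group `A = V × V × ZMod p` -/

def GA (p : ℕ) (V : Type) : Type := V × V × ZMod p

namespace GA

variable {p : ℕ} {V : Type} [AddCommGroup V] [Module (ZMod p) V]

instance : One (GA p V) := ⟨((0 : V), (0 : V), (0 : ZMod p))⟩
instance : Mul (GA p V) :=
  ⟨fun u w => (u.1 + w.1 + u.2.2 • w.2.1, u.2.1 + w.2.1, u.2.2 + w.2.2)⟩
instance : Inv (GA p V) := ⟨fun u => (u.2.2 • u.2.1 - u.1, -u.2.1, -u.2.2)⟩

theorem mul_def (u w : GA p V) :
    u * w = (u.1 + w.1 + u.2.2 • w.2.1, u.2.1 + w.2.1, u.2.2 + w.2.2) := rfl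

theorem one_def : (1 : GA p V) = ((0 : V), (0 : V), (0 : ZMod p)) := rfl

theorem inv_def (u : GA p V) : u⁻¹ = (u.2.2 • u.2.1 - u.1, -u.2.1, -u.2.2) := rfl

protected theorem ext {u w : GA p V} (h1 : u.1 = w.1) (h2 : u.2.1 = w.2.1)
    (h3 : u.2.2 = w.2.2) : u = w := by
  obtain ⟨a, b, c⟩ := u
  obtain ⟨a', b', c'⟩ := w
  simp only at h1 h2 h3
  subst h1 h2 h3
  rfl

theorem fst_eq {u w : GA p V} (h : u = w) : u.1 = w.1 := by rw [h]
theorem snd_eq {u w : GA p V} (h : u = w) : u.2.1 = w.2.1 := by rw [h]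
theorem trd_eq {u w : GA p V} (h : u = w) : u.2.2 = w.2.2 := by rw [h]

instance instGroup : Group (GA p V) where
  mul_assoc u v w := by
    refine GA.ext ?_ ?_ ?_
    · show u.1 + v.1 + u.2.2 • v.2.1 + w.1 + (u.2.2 + v.2.2) • w.2.1
        = u.1 + (v.1 + w.1 + v.2.2 • w.2.1) + u.2.2 • (v.2.1 + w.2.1)
      simp only [smul_add, add_smul]; abel
    · show u.2.1 + v.2.1 + w.2.1 = u.2.1 + (v.2.1 + w.2.1); abel
    · show u.2.2 + v.2.2 + w.2.2 = u.2.2 + (v.2.2 + w.2.2); abel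
  one_mul u := by
    refine GA.ext ?_ ?_ ?_
    · show 0 + u.1 + (0 : ZMod p) • u.2.1 = u.1; simp
    · show 0 + u.2.1 = u.2.1; simp
    · show 0 + u.2.2 = u.2.2; simp
  mul_one u := by
    refine GA.ext ?_ ?_ ?_
    · show u.1 + 0 + u.2.2 • (0 : V) = u.1; simp
    · show u.2.1 + 0 = u.2.1; simp
    · show u.2.2 + 0 = u.2.2; simp
  inv_mul_cancel u := by
    refine GA.ext ?_ ?_ ?_
    · show u.2.2 • u.2.1 - u.1 + u.1 + (-u.2.2) • u.2.1 = 0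
      simp only [neg_smul]; abel
    · show -u.2.1 + u.2.1 = 0; abel
    · show -u.2.2 + u.2.2 = 0; abel

/-- The central copy of `V` in the gadget. -/
def ι (v : V) : GA p V := (v, 0, 0)

theorem ι_mul (v w : V) : (ι v : GA p V) * ι w = ι (v + w) := by
  rw [GA.mul_def]
  refine GA.ext ?_ ?_ ?_ <;> simp [ι]

theorem ι_zero : (ι 0 : GA p V) = 1 := rfl

theorem ι_central (v : V) (u : GA p V) : ι v * u = u * ι v := by
  rw [GA.mul_def, GA.mul_def]
  refine GA.ext ?_ ?_ ?_ <;> simp [ι, add_comm]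

theorem ι_injective : Function.Injective (ι : V → GA p V) := by
  intro v w h
  exact fst_eq h

/-- Constructor for the gadget. -/
def mk (x n : V) (a : ZMod p) : GA p V := (x, n, a)

theorem mk_fst (x n : V) (a : ZMod p) : (mk x n a : GA p V).1 = x := rfl
theorem mk_snd (x n : V) (a : ZMod p) : (mk x n a : GA p V).2.1 = n := rfl
theorem mk_trd (x n : V) (a : ZMod p) : (mk x n a : GA p V).2.2 = a := rfl

theorem ι_eq_commutator (v : V) :
    (ι v : GA p V) = mk 0 (-v) 0 * mk 0 0 1 * (mk 0 (-v) 0)⁻¹ * (mk 0 0 1)⁻¹ := by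
  rw [GA.mul_def, GA.mul_def, GA.mul_def, GA.inv_def, GA.inv_def]
  refine GA.ext ?_ ?_ ?_ <;>
    simp [ι, mk] <;> abel

/-- Projection onto the last two coordinates. -/
def proj : GA p V →* Multiplicative (V × ZMod p) where
  toFun u := Multiplicative.ofAdd (u.2.1, u.2.2)
  map_one' := rfl
  map_mul' u w := by
    simp only [mul_def]
    rfl

theorem proj_apply (u : GA p V) : proj u = Multiplicative.ofAdd (u.2.1, u.2.2) := rfl

theorem ι_pow (v : V) (k : ℕ) : (ι v : GA p V) ^ k = ι (k • v) := by
  induction k with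
  | zero => simp [ι_zero]
  | succ n ih => rw [pow_succ, ih, ι_mul, succ_nsmul]

theorem pow_p_mem (u : GA p V) : ∃ w : V, u ^ p = ι w := by
  have h1 : Multiplicative.toAdd (proj (u ^ p)) = 0 := by
    rw [map_pow, toAdd_pow]
    have : Multiplicative.toAdd (proj u) = ((u.2.1, u.2.2) : V × ZMod p) := rfl
    rw [this, Prod.smul_mk, ZModModule.char_nsmul_eq_zero p u.2.1,
      ZModModule.char_nsmul_eq_zero p u.2.2]
    rfl
  have h2 : ((u ^ p).2.1, (u ^ p).2.2) = ((0 : V), (0 : ZMod p)) := h1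
  refine ⟨(u ^ p).1, ?_⟩
  refine GA.ext rfl ?_ ?_
  · exact (Prod.ext_iff.mp h2).1
  · exact (Prod.ext_iff.mp h2).2

theorem pow_pp (u : GA p V) : u ^ (p * p) = 1 := by
  obtain ⟨w, hw⟩ := pow_p_mem u
  rw [pow_mul, hw, ι_pow, ZModModule.char_nsmul_eq_zero p, ι_zero]

theorem isPGroup : IsPGroup p (GA p V) := fun u =>
  ⟨2, by rw [pow_two]; exact pow_pp u⟩

/-- Automorphism of the gadget from an additive automorphism of `V`. -/
def gaut (e : AddAut V) : MulAut (GA p V) where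
  toFun u := (e u.1, e u.2.1, u.2.2)
  invFun u := (e.symm u.1, e.symm u.2.1, u.2.2)
  left_inv u := by refine GA.ext ?_ ?_ ?_ <;> simp
  right_inv u := by refine GA.ext ?_ ?_ ?_ <;> simp
  map_mul' u w := by
    refine GA.ext ?_ ?_ ?_
    · show e (u.1 + w.1 + u.2.2 • w.2.1) = e u.1 + e w.1 + u.2.2 • e w.2.1
      rw [map_add, map_add, ZMod.map_smul]
    · show e (u.2.1 + w.2.1) = e u.2.1 + e w.2.1
      rw [map_add]
    · rfl

theorem gaut_apply (e : AddAut V) (u : GA p V) : gaut e u = (e u.1, e u.2.1, u.2.2) := rfl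

theorem gaut_ι (e : AddAut V) (v : V) : gaut e (ι v) = (ι (e v) : GA p V) := by
  rw [gaut_apply]
  refine GA.ext ?_ ?_ ?_ <;> simp [ι]

theorem gaut_one : gaut (1 : AddAut V) = (1 : MulAut (GA p V)) :=
  MulEquiv.ext fun _ => GA.ext rfl rfl rfl

theorem gaut_mul (e f : AddAut V) :
    (gaut (e * f) : MulAut (GA p V)) = gaut e * gaut f :=
  MulEquiv.ext fun _ => GA.ext rfl rfl rfl

/-- Action of a group on the gadget, from an action on `V`. -/
def gRho {Q : Type*} [Group Q] (ρ : Q →* AddAut V) : Q →* MulAut (GA p V) where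
  toFun q := gaut (ρ q)
  map_one' := by show gaut (ρ 1) = 1; rw [map_one, gaut_one]
  map_mul' q r := by show gaut (ρ (q * r)) = gaut (ρ q) * gaut (ρ r); rw [map_mul, gaut_mul]

theorem gRho_apply {Q : Type*} [Group Q] (ρ : Q →* AddAut V) (q : Q) (u : GA p V) :
    gRho ρ q u = (ρ q u.1, ρ q u.2.1, u.2.2) := rfl

instance [Finite V] [NeZero p] : Finite (GA p V) := by
  unfold GA
  infer_instance

end GA
/-! ### Transport helpers -/

/-- `AddAut V →* MulAut (Multiplicative V)`. -/
def addAutToMulAut {V : Type*} [AddGroup V] : AddAut V →* MulAut (Multiplicative V) where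
  toFun e := AddEquiv.toMultiplicative e
  map_one' := by ext x; rfl
  map_mul' e f := by ext x; rfl

theorem addAutToMulAut_apply {V : Type*} [AddGroup V] (e : AddAut V) (x : Multiplicative V) :
    addAutToMulAut e x = Multiplicative.ofAdd (e x.toAdd) := rfl

/-- `MulAut X →* AddAut (Additive X)`. -/
def mulAutToAddAut {X : Type*} [Group X] : MulAut X →* AddAut (Additive X) where
  toFun e := MulEquiv.toAdditive e
  map_one' := by ext x; rfl
  map_mul' e f := by ext x; rfl

theorem mulAutToAddAut_apply {X : Type*} [Group X] (e : MulAut X) (x : Additive X) :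
    mulAutToAddAut e x = Additive.ofMul (e x.toMul) := rfl

/-- Extend an automorphism of `V` to `V × W` fixing the second coordinate. -/
def addAutFst {V W : Type*} [AddCommGroup V] [AddCommGroup W] : AddAut V →* AddAut (V × W) where
  toFun e := AddEquiv.prodCongr e (AddEquiv.refl W)
  map_one' := by ext x <;> rfl
  map_mul' e f := by ext x <;> rfl

theorem addAutFst_apply {V W : Type*} [AddCommGroup V] [AddCommGroup W] (e : AddAut V)
    (x : V × W) : (addAutFst e) x = (e x.1, x.2) := rfl

/-- Congruence of semidirect products. -/
def sdCongr {M₁ M₂ Q : Type*} [Group M₁] [Group M₂] [Group Q]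
    (φ₁ : Q →* MulAut M₁) (φ₂ : Q →* MulAut M₂) (e : M₁ ≃* M₂)
    (h : ∀ q m, e (φ₁ q m) = φ₂ q (e m)) : (M₁ ⋊[φ₁] Q) ≃* (M₂ ⋊[φ₂] Q) where
  toFun x := ⟨e x.left, x.right⟩
  invFun x := ⟨e.symm x.left, x.right⟩
  left_inv x := by ext <;> simp
  right_inv x := by ext <;> simp
  map_mul' x y := by
    ext
    · show e (x.left * φ₁ x.right y.left) = e x.left * φ₂ x.right (e y.left)
      rw [map_mul, h]
    · rfl

/-! ### Formation helpers -/

theorem IsFormation.of_surjective {F : GroupClass} (hF : IsFormation F)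
    {X Y : Type} [Group X] [Finite X] [Group Y] [Finite Y]
    (f : X →* Y) (hf : Function.Surjective f) (hX : F X) : F Y :=
  hF.iso_closed (X ⧸ f.ker) Y ⟨QuotientGroup.quotientKerEquivOfSurjective f hf⟩
    (hF.quotient_closed X f.ker hX)

theorem IsFormation.prod_mem {F : GroupClass} (hF : IsFormation F)
    {X Y : Type} [Group X] [Finite X] [Group Y] [Finite Y]
    (hX : F X) (hY : F Y) : F (X × Y) := by
  refine hF.subdirect_closed (X × Y) (MonoidHom.fst X Y).ker (MonoidHom.snd X Y).ker ?_ ?_ ?_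
  · ext z
    constructor
    · rintro ⟨h1, h2⟩
      have h1' : z.1 = 1 := h1
      have h2' : z.2 = 1 := h2
      simp only [Subgroup.mem_bot, Prod.ext_iff, h1', h2']
      exact ⟨rfl, rfl⟩
    · intro hz
      rw [Subgroup.mem_bot] at hz
      subst hz
      exact ⟨map_one _, map_one _⟩
  · exact hF.iso_closed X _
      ⟨(QuotientGroup.quotientKerEquivOfSurjective (MonoidHom.fst X Y)
        (fun x => ⟨(x, 1), rfl⟩)).symm⟩ hX
  · exact hF.iso_closed Y _
      ⟨(QuotientGroup.quotientKerEquivOfSurjective (MonoidHom.snd X Y)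
        (fun y => ⟨(1, y), rfl⟩)).symm⟩ hY

theorem IsFormation.quot_mono {F : GroupClass} (hF : IsFormation F)
    {X : Type} [Group X] [Finite X] (K₁ K₂ : Subgroup X) [K₁.Normal] [K₂.Normal]
    (h : K₁ ≤ K₂) (hX : F (X ⧸ K₁)) : F (X ⧸ K₂) := by
  refine hF.of_surjective (QuotientGroup.map K₁ K₂ (MonoidHom.id X) (by simpa using h)) ?_ hX
  intro y
  obtain ⟨x, rfl⟩ := QuotientGroup.mk'_surjective K₂ y
  exact ⟨QuotientGroup.mk x, QuotientGroup.map_mk _ _ _ _ _⟩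

/-! ### The core construction -/

section CoreConstruction

open SemidirectProduct

variable (p : ℕ) {G Q V : Type} [Group G] [Group Q] [AddCommGroup V] [Module (ZMod p) V]
variable (π : G →* Q) (ρ : Q →* AddAut V)

/-- The action of `G` on the gadget. -/
def PsiG : G →* MulAut (GA p V) := (GA.gRho ρ).comp π

/-- The action of `Q` on `Multiplicative (V × ZMod p)`. -/
def PsiBar : Q →* MulAut (Multiplicative (V × ZMod p)) :=
  addAutToMulAut.comp (addAutFst.comp ρ)

/-- The action of `Q` on `Multiplicative V`. -/
def PsiV : Q →* MulAut (Multiplicative V) := addAutToMulAut.comp ρ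

theorem PsiG_apply (g : G) (u : GA p V) :
    PsiG p π ρ g u = (ρ (π g) u.1, ρ (π g) u.2.1, u.2.2) := rfl

theorem PsiBar_apply (q : Q) (m : Multiplicative (V × ZMod p)) :
    PsiBar p ρ q m = Multiplicative.ofAdd (ρ q m.toAdd.1, m.toAdd.2) := rfl

/-- The big group `Z = A ⋊ G`. -/
abbrev ZC := GA p V ⋊[PsiG p π ρ] G

/-- The comparison group `T̄`. -/
abbrev TBar := Multiplicative (V × ZMod p) ⋊[PsiBar p ρ] Q

/-- The comparison group `T_V ≅ N ⋊ (G/N)`. -/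
abbrev TV := Multiplicative V ⋊[PsiV ρ] Q

/-- The projection `Z → T̄`. -/
def thetaC : ZC p π ρ →* TBar p ρ :=
  SemidirectProduct.lift (inl.comp GA.proj) (inr.comp π) (by
    intro g
    refine MonoidHom.ext fun u => ?_
    show inl (GA.proj (PsiG p π ρ g u)) = MulAut.conj ((inr.comp π) g) (inl (GA.proj u))
    rw [MulAut.conj_apply, MonoidHom.comp_apply, ← map_inv, ← SemidirectProduct.inl_aut]
    rfl)

theorem thetaC_apply (z : ZC p π ρ) :
    thetaC p π ρ z = ⟨GA.proj z.left, π z.right⟩ := by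
  show inl (GA.proj z.left) * inr (π z.right) = _
  rw [← mk_eq_inl_mul_inr]

theorem thetaC_surjective (hπ : Function.Surjective π) :
    Function.Surjective (thetaC p π ρ) := by
  intro t
  obtain ⟨g, hg⟩ := hπ t.right
  refine ⟨⟨GA.mk 0 t.left.toAdd.1 t.left.toAdd.2, g⟩, ?_⟩
  rw [thetaC_apply]
  apply SemidirectProduct.ext
  · show Multiplicative.ofAdd (t.left.toAdd.1, t.left.toAdd.2) = t.left
    rfl
  · exact hg

/-- First comparison projection `T̄ → T_V`. -/
def tau1 : TBar p ρ →* TV ρ :=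
  SemidirectProduct.lift
    (inl.comp ((AddMonoidHom.fst V (ZMod p)).toMultiplicative : _ →* Multiplicative V))
    inr (by
      intro q
      refine MonoidHom.ext fun m => ?_
      show inl (Multiplicative.ofAdd ((PsiBar p ρ q m).toAdd.1))
          = MulAut.conj (inr q) (inl (Multiplicative.ofAdd m.toAdd.1))
      rw [MulAut.conj_apply, ← map_inv, ← SemidirectProduct.inl_aut]
      rfl)

theorem tau1_apply (t : TBar p ρ) :
    tau1 p ρ t = ⟨Multiplicative.ofAdd t.left.toAdd.1, t.right⟩ := by
  show inl _ * inr _ = _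
  rw [← mk_eq_inl_mul_inr]
  rfl

theorem tau1_surjective : Function.Surjective (tau1 p ρ) := by
  intro t
  refine ⟨⟨Multiplicative.ofAdd (t.left.toAdd, 0), t.right⟩, ?_⟩
  rw [tau1_apply]
  ext <;> rfl

/-- Second comparison projection `T̄ → ZMod p × Q`. -/
def tau2 : TBar p ρ →* Multiplicative (ZMod p) × Q :=
  SemidirectProduct.lift
    ((MonoidHom.inl (Multiplicative (ZMod p)) Q).comp
      ((AddMonoidHom.snd V (ZMod p)).toMultiplicative : _ →* Multiplicative (ZMod p)))
    (MonoidHom.inr (Multiplicative (ZMod p)) Q) (by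
      intro q
      refine MonoidHom.ext fun m => ?_
      show ((Multiplicative.ofAdd ((PsiBar p ρ q m).toAdd.2), (1 : Q))
          : Multiplicative (ZMod p) × Q)
          = MulAut.conj ((1, q)) ((Multiplicative.ofAdd m.toAdd.2, 1))
      rw [MulAut.conj_apply]
      simp only [Prod.inv_mk, Prod.mk_mul_mk, one_mul, mul_one, inv_one, mul_inv_cancel]
      rfl)

theorem tau2_apply (t : TBar p ρ) :
    tau2 p ρ t = (Multiplicative.ofAdd t.left.toAdd.2, t.right) := by
  show ((MonoidHom.inl (Multiplicative (ZMod p)) Q).comp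
      ((AddMonoidHom.snd V (ZMod p)).toMultiplicative)) t.left
      * (MonoidHom.inr (Multiplicative (ZMod p)) Q) t.right = _
  rw [MonoidHom.comp_apply, MonoidHom.inl_apply, MonoidHom.inr_apply, Prod.mk_mul_mk,
    mul_one, one_mul]
  rfl

theorem tau2_surjective : Function.Surjective (tau2 p ρ) := by
  intro t
  refine ⟨⟨Multiplicative.ofAdd (0, t.1.toAdd), t.2⟩, ?_⟩
  rw [tau2_apply]
  ext <;> rfl

theorem ker_tau1_inf_ker_tau2 : (tau1 p ρ).ker ⊓ (tau2 p ρ).ker = ⊥ := by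
  ext t
  constructor
  · intro ht
    obtain ⟨h1, h2⟩ := Subgroup.mem_inf.mp ht
    rw [MonoidHom.mem_ker, tau1_apply] at h1
    rw [MonoidHom.mem_ker, tau2_apply] at h2
    rw [Subgroup.mem_bot]
    have e11 : Multiplicative.ofAdd t.left.toAdd.1 = (1 : Multiplicative V) :=
      congrArg SemidirectProduct.left h1
    have e12 : t.right = 1 := congrArg SemidirectProduct.right h1
    have e2 : Multiplicative.ofAdd t.left.toAdd.2 = (1 : Multiplicative (ZMod p)) :=
      congrArg Prod.fst h2
    apply SemidirectProduct.ext
    · show t.left = 1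
      have h1' : t.left.toAdd.1 = 0 := e11
      have h2' : t.left.toAdd.2 = 0 := e2
      have : t.left.toAdd = 0 := Prod.ext_iff.mpr ⟨h1', h2'⟩
      exact this
    · exact e12
  · intro ht
    rw [Subgroup.mem_bot] at ht
    subst ht
    exact ⟨map_one _, map_one _⟩

end CoreConstruction
section CoreConstruction2

open SemidirectProduct

variable (p : ℕ) {G Q V : Type} [Group G] [Group Q] [AddCommGroup V] [Module (ZMod p) V]
variable (π : G →* Q) (ρ : Q →* AddAut V) (j : Multiplicative V →* G)

theorem PsiG_j (hker : ∀ v, π (j v) = 1) (v : Multiplicative V) :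
    PsiG p π ρ (j v) = 1 := by
  show (GA.gRho ρ) (π (j v)) = 1
  rw [hker, map_one]

theorem PsiG_ι (g : G) (v : V) : PsiG p π ρ g (GA.ι v) = GA.ι (ρ (π g) v) :=
  GA.gaut_ι _ _

theorem inr_swap_inl (h : G) (c : GA p V) :
    (inr h : ZC p π ρ) * inl c = inl (PsiG p π ρ h c) * inr h := by
  rw [SemidirectProduct.inl_aut, map_inv]
  group

/-- The map whose range is the twisted diagonal `B`. -/
def betaHom (hker : ∀ v, π (j v) = 1) : Multiplicative V →* ZC p π ρ where
  toFun v := ⟨GA.ι v.toAdd, j v⁻¹⟩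
  map_one' := by
    ext
    · exact GA.ι_zero
    · show j 1⁻¹ = 1
      rw [inv_one, map_one]
  map_mul' v w := by
    ext
    · show GA.ι (v * w).toAdd = GA.ι v.toAdd * (PsiG p π ρ (j v⁻¹)) (GA.ι w.toAdd)
      rw [PsiG_j p π ρ j hker, MulAut.one_apply, GA.ι_mul]
      rfl
    · show j (v * w)⁻¹ = j v⁻¹ * j w⁻¹
      rw [← map_mul, mul_inv]

variable (hker : ∀ v, π (j v) = 1)
  (hconj : ∀ (g : G) (v : Multiplicative V),
    j (Multiplicative.ofAdd (ρ (π g) v.toAdd)) = g * j v * g⁻¹)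

theorem betaHom_apply (v : Multiplicative V) :
    betaHom p π ρ j hker v = ⟨GA.ι v.toAdd, j v⁻¹⟩ := rfl

theorem betaHom_decomp (v : Multiplicative V) :
    betaHom p π ρ j hker v = inl (GA.ι v.toAdd) * inr (j v⁻¹) :=
  mk_eq_inl_mul_inr _ _

include hconj in
theorem betaHom_conj_inr (g : G) (w : Multiplicative V) :
    (inr g : ZC p π ρ) * betaHom p π ρ j hker w * (inr g)⁻¹
      = betaHom p π ρ j hker (Multiplicative.ofAdd (ρ (π g) w.toAdd)) := by
  rw [betaHom_decomp, betaHom_decomp]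
  have h1 : (inr g : ZC p π ρ) * (inl (GA.ι w.toAdd) * inr (j w⁻¹)) * (inr g)⁻¹
      = (inr g * inl (GA.ι w.toAdd) * (inr g)⁻¹) * (inr g * inr (j w⁻¹) * (inr g)⁻¹) := by
    group
  rw [h1]
  have h2 : (inr g : ZC p π ρ) * inl (GA.ι w.toAdd) * (inr g)⁻¹
      = inl (PsiG p π ρ g (GA.ι w.toAdd)) := by
    rw [← map_inv]
    exact (SemidirectProduct.inl_aut g _).symm
  have h3 : (inr g : ZC p π ρ) * inr (j w⁻¹) * (inr g)⁻¹ = inr (g * j w⁻¹ * g⁻¹) := by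
    rw [← map_inv, ← map_mul, ← map_mul]
  rw [h2, h3, PsiG_ι, ← hconj g w⁻¹]
  have h4 : Multiplicative.ofAdd (ρ (π g) (Multiplicative.toAdd w⁻¹))
      = (Multiplicative.ofAdd (ρ (π g) w.toAdd))⁻¹ := by
    show Multiplicative.ofAdd (ρ (π g) (-w.toAdd)) = _
    rw [map_neg]
    rfl
  rw [h4]
  rfl

include hker in
theorem betaHom_conj_inl (b : GA p V) (w : Multiplicative V) :
    (inl b : ZC p π ρ) * betaHom p π ρ j hker w * (inl b)⁻¹ = betaHom p π ρ j hker w := by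
  rw [betaHom_decomp]
  have h1 : (inl b : ZC p π ρ) * (inl (GA.ι w.toAdd) * inr (j w⁻¹)) * (inl b)⁻¹
      = inl b * inl (GA.ι w.toAdd) * (inr (j w⁻¹) * inl b⁻¹) * (inr (j w⁻¹))⁻¹
        * inr (j w⁻¹) := by
    rw [← map_inv]
    group
  rw [h1, inr_swap_inl, PsiG_j p π ρ j hker, MulAut.one_apply]
  have h2 : (inl b : ZC p π ρ) * inl (GA.ι w.toAdd) * (inl b⁻¹ * inr (j w⁻¹))
        * (inr (j w⁻¹))⁻¹ * inr (j w⁻¹)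
      = inl b * inl (GA.ι w.toAdd) * inl b⁻¹ * inr (j w⁻¹) := by group
  rw [h2, ← map_mul, ← map_mul]
  have h6 : b * GA.ι w.toAdd * b⁻¹ = GA.ι w.toAdd := by
    rw [← GA.ι_central, mul_assoc, mul_inv_cancel, mul_one]
  rw [h6]

include hker hconj in
theorem betaHom_range_normal : ((betaHom p π ρ j hker).range).Normal := by
  constructor
  intro n hn z
  obtain ⟨v, rfl⟩ := hn
  have hz : z = inl z.left * inr z.right := (inl_left_mul_inr_right z).symm
  rw [hz]
  have h1 : (inl z.left * inr z.right) * betaHom p π ρ j hker v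
        * (inl z.left * inr z.right)⁻¹
      = inl z.left * (inr z.right * betaHom p π ρ j hker v * (inr z.right)⁻¹)
        * (inl z.left)⁻¹ := by group
  rw [h1, betaHom_conj_inr p π ρ j hker hconj, betaHom_conj_inl p π ρ j hker]
  exact ⟨Multiplicative.ofAdd (ρ (π z.right) v.toAdd), rfl⟩

include hker hconj in
theorem gammaHom_range_normal : ((inr.comp j : Multiplicative V →* ZC p π ρ).range).Normal := by
  constructor
  intro n hn z
  obtain ⟨v, rfl⟩ := hn
  have hz : z = inl z.left * inr z.right := (inl_left_mul_inr_right z).symm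
  rw [hz]
  show inl z.left * inr z.right * inr (j v) * (inl z.left * inr z.right)⁻¹ ∈ _
  have h1 : (inl z.left * inr z.right) * inr (j v) * (inl z.left * inr z.right)⁻¹
      = inl z.left * ((inr z.right : ZC p π ρ) * inr (j v) * (inr z.right)⁻¹)
        * (inl z.left)⁻¹ := by group
  rw [h1]
  have h2 : (inr z.right : ZC p π ρ) * inr (j v) * (inr z.right)⁻¹
      = inr (j (Multiplicative.ofAdd (ρ (π z.right) v.toAdd))) := by
    rw [← map_inv, ← map_mul, ← map_mul, hconj]
  rw [h2]
  set w := Multiplicative.ofAdd (ρ (π z.right) v.toAdd) with hwdef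
  have h3 : (inl z.left : ZC p π ρ) * inr (j w) * (inl z.left)⁻¹ = inr (j w) := by
    have h4 : (inl z.left : ZC p π ρ) * inr (j w) * (inl z.left)⁻¹
        = inl z.left * (inr (j w) * inl z.left⁻¹) * (inr (j w))⁻¹ * inr (j w) := by
      rw [map_inv]
      group
    rw [h4, inr_swap_inl, PsiG_j p π ρ j hker, MulAut.one_apply]
    have h5 : (inl z.left : ZC p π ρ) * (inl z.left⁻¹ * inr (j w)) * (inr (j w))⁻¹
          * inr (j w) = inl z.left * inl z.left⁻¹ * inr (j w) := by group
    rw [h5, ← map_mul, mul_inv_cancel, map_one, one_mul]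
  rw [h3]
  exact ⟨w, rfl⟩

theorem betaHom_inf_gammaHom :
    (betaHom p π ρ j hker).range ⊓ (inr.comp j : Multiplicative V →* ZC p π ρ).range = ⊥ := by
  ext z
  constructor
  · intro hz
    obtain ⟨h1, h2⟩ := Subgroup.mem_inf.mp hz
    obtain ⟨v, rfl⟩ := h1
    obtain ⟨w, hw⟩ := h2
    have hleft : GA.ι v.toAdd = (1 : GA p V) := by
      have := congrArg SemidirectProduct.left hw
      exact this.symm
    have hv : v.toAdd = (0 : V) := GA.ι_injective (by rw [hleft, GA.ι_zero])
    have hv1 : v = 1 := hv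
    rw [Subgroup.mem_bot, hv1, map_one]
  · intro hz
    rw [Subgroup.mem_bot] at hz
    subst hz
    exact Subgroup.mem_inf.mpr ⟨Subgroup.one_mem _, Subgroup.one_mem _⟩

end CoreConstruction2
section CoreMain

open SemidirectProduct

variable (p : ℕ) {G Q V : Type} [Group G] [Group Q] [AddCommGroup V] [Module (ZMod p) V]
variable [Finite G] [Finite Q] [Finite V] [NeZero p]
variable (π : G →* Q) (ρ : Q →* AddAut V) (j : Multiplicative V →* G)

theorem range_inl_normal : ((inl : GA p V →* ZC p π ρ).range).Normal := by
  rw [SemidirectProduct.range_inl_eq_ker_rightHom]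
  infer_instance

theorem isPGroup_range_inl : IsPGroup p ((inl : GA p V →* ZC p π ρ).range) := by
  have h1 : IsPGroup p (⊤ : Subgroup (GA p V)) := GA.isPGroup.to_subgroup ⊤
  have h2 := h1.map (inl : GA p V →* ZC p π ρ)
  rwa [← MonoidHom.range_eq_map] at h2

/-- The key `ℕ_p`-saturation step. -/
theorem quot_mem
    (F : GroupClass) (hF : IsFormation F) (hsat : NpSaturated p F)
    (hTbar : F (TBar p ρ))
    (hπ : Function.Surjective π)
    (hker2 : ∀ g : G, π g = 1 → g ∈ j.range)
    (D : Subgroup (ZC p π ρ)) (hDn : D.Normal)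
    (hD : ∀ v : Multiplicative V, ∃ x : V, (⟨GA.ι x, j v⟩ : ZC p π ρ) ∈ D) :
    F (ZC p π ρ ⧸ D) := by
  haveI := hDn
  set W : Subgroup (ZC p π ρ ⧸ D) :=
    Subgroup.map (QuotientGroup.mk' D) (inl : GA p V →* ZC p π ρ).range with hWdef
  haveI hWn : W.Normal :=
    Subgroup.Normal.map (range_inl_normal p π ρ) _ (QuotientGroup.mk'_surjective D)
  have hWp : IsPGroup p W := (isPGroup_range_inl p π ρ).map _
  set M : Subgroup (ZC p π ρ ⧸ D) := (frattini W).map W.subtype with hMdef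
  haveI hMn : M.Normal := ConjAct.normal_of_characteristic_of_normal
  -- Fact 1 : images of central elements `ι x` land in `M`.
  have fact1 : ∀ x : V, QuotientGroup.mk' D (inl (GA.ι x)) ∈ M := by
    intro x
    have hmem : QuotientGroup.mk' D (inl (GA.ι x)) ∈ W :=
      Subgroup.mem_map.mpr ⟨inl (GA.ι x), MonoidHom.mem_range.mpr ⟨GA.ι x, rfl⟩, rfl⟩
    set m : ↥W := ⟨QuotientGroup.mk' D (inl (GA.ι x)), hmem⟩ with hmdef
    have hcentral : ∀ y : ↥W, m * y = y * m := by
      intro y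
      obtain ⟨zy, hzy, hzy2⟩ := Subgroup.mem_map.mp y.2
      obtain ⟨u, rfl⟩ := MonoidHom.mem_range.mp hzy
      apply Subtype.ext
      show QuotientGroup.mk' D (inl (GA.ι x)) * (y : ZC p π ρ ⧸ D)
          = (y : ZC p π ρ ⧸ D) * QuotientGroup.mk' D (inl (GA.ι x))
      rw [← hzy2, ← map_mul, ← map_mul, ← map_mul, ← map_mul, GA.ι_central]
    have hcomm : ∃ w₁ w₂ : ↥W, m = w₁ * w₂ * w₁⁻¹ * w₂⁻¹ := by
      have hm1 : QuotientGroup.mk' D (inl (GA.mk 0 (-x) 0)) ∈ W :=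
        Subgroup.mem_map.mpr ⟨_, MonoidHom.mem_range.mpr ⟨GA.mk 0 (-x) 0, rfl⟩, rfl⟩
      have hm2 : QuotientGroup.mk' D (inl (GA.mk 0 0 1)) ∈ W :=
        Subgroup.mem_map.mpr ⟨_, MonoidHom.mem_range.mpr ⟨GA.mk 0 0 1, rfl⟩, rfl⟩
      refine ⟨⟨_, hm1⟩, ⟨_, hm2⟩, ?_⟩
      apply Subtype.ext
      show QuotientGroup.mk' D (inl (GA.ι x)) = _
      have := congrArg ((QuotientGroup.mk' D).comp (inl : GA p V →* ZC p π ρ))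
        (GA.ι_eq_commutator x)
      simp only [map_mul, map_inv, MonoidHom.comp_apply] at this
      exact this
    obtain ⟨w₁, w₂, hw⟩ := hcomm
    have hfrat : m ∈ frattini ↥W :=
      mem_frattini_of_central_commutator hcentral hw
    exact Subgroup.mem_map.mpr ⟨m, hfrat, rfl⟩
  -- Fact 2 : `ker θ ≤ ker κ`.
  set κ : ZC p π ρ →* (ZC p π ρ ⧸ D) ⧸ M := (QuotientGroup.mk' M).comp (QuotientGroup.mk' D)
    with hκdef
  have fact2 : (thetaC p π ρ).ker ≤ κ.ker := by
    intro z hz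
    rw [MonoidHom.mem_ker, thetaC_apply] at hz
    have h1 : GA.proj z.left = 1 := congrArg SemidirectProduct.left hz
    have h2 : π z.right = 1 := congrArg SemidirectProduct.right hz
    obtain ⟨w, hw⟩ := hker2 z.right h2
    have h21 : z.left.2.1 = 0 := congrArg (fun q : V × ZMod p => q.1) (congrArg Multiplicative.toAdd h1)
    have h22 : z.left.2.2 = 0 := congrArg (fun q : V × ZMod p => q.2) (congrArg Multiplicative.toAdd h1)
    have hzl : z.left = GA.ι z.left.1 := GA.ext rfl h21 h22
    obtain ⟨x, hx⟩ := hD w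
    have hdec : z = inl (GA.ι (z.left.1 - x)) * (⟨GA.ι x, j w⟩ : ZC p π ρ) := by
      have hthis : (inl (GA.ι (z.left.1 - x)) * (⟨GA.ι x, j w⟩ : ZC p π ρ)).left
          = GA.ι (z.left.1 - x) * GA.ι x := by
        show GA.ι (z.left.1 - x) * (PsiG p π ρ 1) (GA.ι x) = _
        rw [map_one, MulAut.one_apply]
      apply SemidirectProduct.ext
      · rw [hthis, GA.ι_mul, sub_add_cancel]
        exact hzl
      · show z.right = 1 * j w
        rw [one_mul, hw]
    rw [MonoidHom.mem_ker, hdec, map_mul]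
    have hd1 : κ ((⟨GA.ι x, j w⟩ : ZC p π ρ)) = 1 := by
      rw [hκdef, MonoidHom.comp_apply]
      have : QuotientGroup.mk' D (⟨GA.ι x, j w⟩ : ZC p π ρ) = 1 :=
        (QuotientGroup.eq_one_iff _).mpr hx
      rw [this, map_one]
    have hd2 : κ (inl (GA.ι (z.left.1 - x))) = 1 := by
      rw [hκdef, MonoidHom.comp_apply]
      exact (QuotientGroup.eq_one_iff _).mpr (fact1 _)
    rw [hd1, hd2, mul_one]
  -- Assemble.
  have hθs := thetaC_surjective p π ρ hπ
  have hF1 : F (ZC p π ρ ⧸ (thetaC p π ρ).ker) :=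
    hF.iso_closed (TBar p ρ) _
      ⟨(QuotientGroup.quotientKerEquivOfSurjective _ hθs).symm⟩ hTbar
  have hF2 : F (ZC p π ρ ⧸ κ.ker) := hF.quot_mono _ _ fact2 hF1
  have hκs : Function.Surjective κ := by
    intro y
    obtain ⟨y', rfl⟩ := QuotientGroup.mk'_surjective M y
    obtain ⟨z, rfl⟩ := QuotientGroup.mk'_surjective D y'
    exact ⟨z, rfl⟩
  have hF3 : F ((ZC p π ρ ⧸ D) ⧸ M) :=
    hF.iso_closed (ZC p π ρ ⧸ κ.ker) _
      ⟨QuotientGroup.quotientKerEquivOfSurjective κ hκs⟩ hF2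
  exact hsat (ZC p π ρ ⧸ D) W hWp M hMdef hF3

/-- Membership of the comparison group `T̄`. -/
theorem Tbar_mem
    (F : GroupClass) (hF : IsFormation F)
    (hNp : ∀ (P : Type) [Group P] [Finite P], IsPGroup p P → F P)
    (hsd : F (TV ρ)) : F (TBar p ρ) := by
  refine hF.subdirect_closed _ (tau1 p ρ).ker (tau2 p ρ).ker (ker_tau1_inf_ker_tau2 p ρ) ?_ ?_
  · exact hF.iso_closed (TV ρ) _
      ⟨(QuotientGroup.quotientKerEquivOfSurjective (tau1 p ρ) (tau1_surjective p ρ)).symm⟩ hsd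
  · have hzp : IsPGroup p (Multiplicative (ZMod p)) := by
      intro a
      refine ⟨1, ?_⟩
      have h : Multiplicative.toAdd (a ^ p ^ 1) = (0 : ZMod p) := by
        rw [pow_one, toAdd_pow]
        exact ZModModule.char_nsmul_eq_zero p _
      exact h
    have hq : F Q := hF.of_surjective (rightHom : TV ρ →* Q) rightHom_surjective hsd
    have hprod : F (Multiplicative (ZMod p) × Q) := hF.prod_mem (hNp _ hzp) hq
    exact hF.iso_closed _ _
      ⟨(QuotientGroup.quotientKerEquivOfSurjective (tau2 p ρ) (tau2_surjective p ρ)).symm⟩ hprod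

/-- The abstract core theorem. -/
theorem core_main
    (F : GroupClass) (hF : IsFormation F) (hsat : NpSaturated p F)
    (hNp : ∀ (P : Type) [Group P] [Finite P], IsPGroup p P → F P)
    (hπ : Function.Surjective π)
    (hker : ∀ v, π (j v) = 1)
    (hker2 : ∀ g : G, π g = 1 → g ∈ j.range)
    (hconj : ∀ (g : G) (v : Multiplicative V),
      j (Multiplicative.ofAdd (ρ (π g) v.toAdd)) = g * j v * g⁻¹)
    (hsd : F (TV ρ)) : F G := by
  have hTbar : F (TBar p ρ) := Tbar_mem p ρ F hF hNp hsd
  haveI hBn : ((betaHom p π ρ j hker).range).Normal := betaHom_range_normal p π ρ j hker hconj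
  haveI hCn : ((inr.comp j : Multiplicative V →* ZC p π ρ).range).Normal :=
    gammaHom_range_normal p π ρ j hker hconj
  have hB : F (ZC p π ρ ⧸ (betaHom p π ρ j hker).range) := by
    refine quot_mem p π ρ j F hF hsat hTbar hπ hker2 _ hBn ?_
    intro v
    refine ⟨-v.toAdd, ⟨v⁻¹, ?_⟩⟩
    rw [betaHom_apply, inv_inv]
    rfl
  have hC : F (ZC p π ρ ⧸ (inr.comp j : Multiplicative V →* ZC p π ρ).range) := by
    refine quot_mem p π ρ j F hF hsat hTbar hπ hker2 _ hCn ?_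
    intro v
    exact ⟨0, ⟨v, rfl⟩⟩
  have hZ : F (ZC p π ρ) :=
    hF.subdirect_closed _ _ _ (betaHom_inf_gammaHom p π ρ j hker) hB hC
  exact hF.of_surjective (rightHom : ZC p π ρ →* G) rightHom_surjective hZ

end CoreMain
/-- Let `𝔉` be an `ℕ_p`-saturated formation containing all finite `p`-groups and
`N` an elementary abelian normal `p`-subgroup of `G`.  If `N ⋊ (G/N) ∈ 𝔉` (with the action
induced by conjugation), then `G ∈ 𝔉`. -/
theorem statement_2 (p : ℕ) (hp : p.Prime) (F : GroupClass) (hF : IsFormation F)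
    (hsat : NpSaturated p F)
    (hNp : ∀ (P : Type) [Group P] [Finite P], IsPGroup p P → F P)
    (G : Type) [Group G] [Finite G] (N : Subgroup G) [N.Normal]
    (hpgrp : IsPGroup p N)
    (hab : ∀ a b : N, a * b = b * a)
    (hord : ∀ x : N, x ≠ 1 → orderOf x = p)
    (φ : G ⧸ N →* MulAut ↥N)
    (hφ : ∀ (g : G) (n : N), (↑(φ (QuotientGroup.mk g) n) : G) = g * ↑n * g⁻¹)
    (hsd : F (↥N ⋊[φ] (G ⧸ N))) :
    F G := by
  haveI : NeZero p := ⟨hp.ne_zero⟩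
  letI cg : CommGroup ↥N := { (inferInstance : Group ↥N) with mul_comm := hab }
  letI : AddCommGroup (Additive ↥N) := Additive.addCommGroup
  have hsmul : ∀ x : Additive ↥N, p • x = 0 := by
    intro x
    have h1 : Additive.toMul (p • x) = (Additive.toMul x) ^ p := rfl
    have h2 : (Additive.toMul x) ^ p = 1 := by
      by_cases hx : Additive.toMul x = 1
      · rw [hx, one_pow]
      · rw [← hord (Additive.toMul x) hx]
        exact pow_orderOf_eq_one _
    exact h2
  letI : Module (ZMod p) (Additive ↥N) := AddCommGroup.zmodModule hsmul
  let ρ : (G ⧸ N) →* AddAut (Additive ↥N) := mulAutToAddAut.comp φ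
  let j : Multiplicative (Additive ↥N) →* G :=
    { toFun := fun v => ((Additive.toMul (Multiplicative.toAdd v) : ↥N) : G)
      map_one' := rfl
      map_mul' := fun a b => rfl }
  have hπ : Function.Surjective (QuotientGroup.mk' N) := QuotientGroup.mk'_surjective N
  have hker : ∀ v, (QuotientGroup.mk' N) (j v) = 1 := by
    intro v
    exact (QuotientGroup.eq_one_iff _).mpr (SetLike.coe_mem _)
  have hker2 : ∀ g : G, (QuotientGroup.mk' N) g = 1 → g ∈ j.range := by
    intro g hg
    have hgN : g ∈ N := (QuotientGroup.eq_one_iff _).mp hg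
    exact ⟨Multiplicative.ofAdd (Additive.ofMul (⟨g, hgN⟩ : ↥N)), rfl⟩
  have hconj : ∀ (g : G) (v : Multiplicative (Additive ↥N)),
      j (Multiplicative.ofAdd (ρ ((QuotientGroup.mk' N) g) v.toAdd)) = g * j v * g⁻¹ := by
    intro g v
    exact hφ g (Additive.toMul (Multiplicative.toAdd v))
  have hsd' : F (TV ρ) := by
    refine hF.iso_closed (↥N ⋊[φ] (G ⧸ N)) (TV ρ) ⟨?_⟩ hsd
    refine sdCongr φ (PsiV ρ)
      { toFun := fun n => Multiplicative.ofAdd (Additive.ofMul n)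
        invFun := fun v => Additive.toMul (Multiplicative.toAdd v)
        left_inv := fun n => rfl
        right_inv := fun v => rfl
        map_mul' := fun a b => rfl } ?_
    intro q m
    rfl
  exact core_main p (QuotientGroup.mk' N) ρ j F hF hsat hNp hπ hker hker2 hconj hsd'
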